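/- For the retroreflector measure ν⋆ (supported on y = x with density cos x · δ(x-y)) and 0 < λ ≤ 1, the moment of the resistance force equals R_I[ν⋆, λ] = -(3/8)∫_{-π/2}^{π/2} ((λ sin x + sin ζ)³/sin ζ) · 2 sin x · cos x dx = -3λ/2, where ζ = arcsin(√(1 - λ² cos² x)). -/

import Mathlib

open Real MeasureTheory
open scoped NNReal ENNReal

noncomputable def gammaM : Measure ℝ :=
  (volume.restrict (Set.Icc (-(π/2)) (π/2))).withDensity
    (fun φ => ENNReal.ofReal (Real.cos φ))

noncomputable def nuStar : Measure (ℝ × ℝ) :=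
  gammaM.map (fun x => (x, x))

noncomputable def zeta (x lam : ℝ) : ℝ :=
  Real.arcsin (Real.sqrt (1 - lam^2 * Real.cos x ^ 2))

/-- integrand of the moment of the resistance force, `0 < λ ≤ 1`. -/
noncomputable def cI (lam : ℝ) (p : ℝ × ℝ) : ℝ :=
  -((3/8) * ((lam * Real.sin p.1 + Real.sin (zeta p.1 lam))^3 / Real.sin (zeta p.1 lam)) *
    (Real.sin p.1 + Real.sin p.2))

lemma sin_zeta (x lam : ℝ) :
    Real.sin (zeta x lam) = Real.sqrt (1 - lam^2 * Real.cos x ^ 2) := by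
  rw [zeta, Real.sin_arcsin]
  · linarith [Real.sqrt_nonneg (1 - lam^2 * Real.cos x ^ 2)]
  · exact Real.sqrt_le_one.mpr
      (by nlinarith [sq_nonneg (lam * Real.cos x), sq_abs (lam * Real.cos x)])

lemma cI_measurable (lam : ℝ) : Measurable (cI lam) := by
  have hs : Continuous fun x : ℝ => Real.sin (zeta x lam) := by
    unfold zeta
    exact Real.continuous_sin.comp (Real.continuous_arcsin.comp
      ((continuous_const.sub (continuous_const.mul (Real.continuous_cos.pow 2))).sqrt))
  have h1 : Continuous fun p : ℝ × ℝ => lam * Real.sin p.1 + Real.sin (zeta p.1 lam) :=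
    (continuous_const.mul (Real.continuous_sin.comp continuous_fst)).add (hs.comp continuous_fst)
  have h2 : Measurable fun p : ℝ × ℝ =>
      (lam * Real.sin p.1 + Real.sin (zeta p.1 lam))^3 / Real.sin (zeta p.1 lam) :=
    (h1.pow 3).measurable.div (hs.comp continuous_fst).measurable
  exact ((measurable_const.mul h2).mul
    ((Real.continuous_sin.comp continuous_fst).add
      (Real.continuous_sin.comp continuous_snd)).measurable).neg

lemma nuStar_integral (lam : ℝ) :
    (∫ p, cI lam p ∂nuStar) =
      ∫ x in Set.Icc (-(π/2)) (π/2), Real.cos x • cI lam (x, x) := by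
  rw [nuStar, integral_map (by fun_prop) (cI_measurable lam).aestronglyMeasurable]
  rw [gammaM]
  rw [show (fun φ => ENNReal.ofReal (Real.cos φ)) =
    (fun φ => ((Real.toNNReal (Real.cos φ) : ℝ≥0) : ℝ≥0∞)) from rfl]
  rw [integral_withDensity_eq_integral_smul (by fun_prop) (fun x => cI lam (x, x))]
  refine setIntegral_congr_fun measurableSet_Icc (fun x hx => ?_)
  rw [NNReal.smul_def, Real.coe_toNNReal _ (Real.cos_nonneg_of_mem_Icc hx)]

lemma key_lt (lam : ℝ) (h0 : 0 < lam) (hlt : lam < 1) :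
    ∫ x in (-(π/2))..(π/2),
      (lam * Real.sin x + Real.sqrt (1 - lam^2 * Real.cos x ^ 2))^3 /
        Real.sqrt (1 - lam^2 * Real.cos x ^ 2) * (2 * Real.sin x) * Real.cos x = 4 * lam := by
  set σ : ℝ → ℝ := fun x => Real.sqrt (1 - lam^2 * Real.cos x ^ 2) with hσdef
  have hpos : ∀ x : ℝ, 0 < 1 - lam^2 * Real.cos x ^ 2 := by
    intro x
    have h2 : lam^2 < 1 := by nlinarith
    have h3 : Real.cos x ^ 2 ≤ 1 := Real.cos_sq_le_one x
    nlinarith [sq_nonneg lam, sq_nonneg (Real.cos x)]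
  have hσpos : ∀ x : ℝ, 0 < σ x := fun x => Real.sqrt_pos.mpr (hpos x)
  have hσsq : ∀ x : ℝ, σ x ^ 2 = 1 - lam^2 * Real.cos x ^ 2 := fun x =>
    Real.sq_sqrt (le_of_lt (hpos x))
  set F : ℝ → ℝ := fun x =>
    2*lam*(Real.sin x ^ 3 * σ x) + 2*lam^2*Real.sin x ^ 4 + (1-lam^2)*Real.sin x ^ 2 with hF
  have hderiv : ∀ x : ℝ, HasDerivAt F
      ((lam * Real.sin x + σ x)^3 / σ x * (2 * Real.sin x) * Real.cos x) x := by
    intro x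
    have hu : HasDerivAt (fun x => 1 - lam^2 * Real.cos x ^ 2)
        (2 * lam^2 * Real.cos x * Real.sin x) x := by
      have := (((Real.hasDerivAt_cos x).pow 2).const_mul (lam^2)).const_sub 1
      simp only [Pi.pow_apply] at this
      refine this.congr_deriv ?_
      push_cast
      ring
    have hσd : HasDerivAt σ (2 * lam^2 * Real.cos x * Real.sin x / (2 * σ x)) x :=
      hu.sqrt (ne_of_gt (hpos x))
    have hs : HasDerivAt Real.sin (Real.cos x) x := Real.hasDerivAt_sin x
    have hFd := ((((hs.pow 3).mul hσd).const_mul (2*lam)).add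
      (((hs.pow 4).const_mul (2*lam^2)))).add ((hs.pow 2).const_mul (1-lam^2))
    refine hFd.congr_deriv ?_
    have hne := ne_of_gt (hσpos x)
    have hc2 : Real.cos x ^ 2 = 1 - Real.sin x ^ 2 := by
      have := Real.sin_sq_add_cos_sq x; linarith
    have hσ2 : σ x ^ 2 = 1 - lam^2 + lam^2 * Real.sin x ^ 2 := by
      rw [hσsq x, hc2]; ring
    push_cast [Pi.pow_apply]
    field_simp
    linear_combination (-Real.sin x*Real.cos x*σ x) * hσ2
  have hcont : Continuous fun x =>
      (lam * Real.sin x + σ x)^3 / σ x * (2 * Real.sin x) * Real.cos x := by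
    have hσc : Continuous σ :=
      (continuous_const.sub (continuous_const.mul (Real.continuous_cos.pow 2))).sqrt
    exact ((((continuous_const.mul Real.continuous_sin).add hσc).pow 3).div hσc
      (fun x => ne_of_gt (hσpos x))).mul (continuous_const.mul Real.continuous_sin) |>.mul
      Real.continuous_cos
  have := intervalIntegral.integral_eq_sub_of_hasDerivAt
    (f := F) (a := -(π/2)) (b := π/2)
    (fun x _ => hderiv x) (hcont.intervalIntegrable _ _)
  rw [this]
  have hσa : σ (π/2) = 1 := by simp [hσdef, Real.cos_pi_div_two]
  have hσb : σ (-(π/2)) = 1 := by simp [hσdef, Real.cos_pi_div_two]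
  simp [hF, hσa, hσb, Real.sin_pi_div_two, Real.cos_pi_div_two]
  ring

lemma key_one :
    ∫ x in (-(π/2))..(π/2),
      ((1:ℝ) * Real.sin x + Real.sqrt (1 - (1:ℝ)^2 * Real.cos x ^ 2))^3 /
        Real.sqrt (1 - (1:ℝ)^2 * Real.cos x ^ 2) * (2 * Real.sin x) * Real.cos x = 4 * 1 := by
  have habs : ∀ x : ℝ, Real.sqrt (1 - (1:ℝ)^2 * Real.cos x ^ 2) = |Real.sin x| := by
    intro x
    rw [show 1 - (1:ℝ)^2 * Real.cos x ^ 2 = Real.sin x ^ 2 by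
      have := Real.sin_sq_add_cos_sq x; linarith]
    exact Real.sqrt_sq_eq_abs _
  have hfun : ∀ x : ℝ,
      ((1:ℝ) * Real.sin x + Real.sqrt (1 - (1:ℝ)^2 * Real.cos x ^ 2))^3 /
        Real.sqrt (1 - (1:ℝ)^2 * Real.cos x ^ 2) * (2 * Real.sin x) * Real.cos x
      = 2 * (Real.sin x + |Real.sin x|)^3 * Real.cos x := by
    intro x
    rw [habs x, one_mul]
    rcases lt_trichotomy (Real.sin x) 0 with h | h | h
    · rw [abs_of_neg h]
      ring_nf
    · simp [h]
    · rw [abs_of_pos h]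
      field_simp
  simp only [hfun]
  have hcont : Continuous fun x : ℝ => 2 * (Real.sin x + |Real.sin x|)^3 * Real.cos x :=
    (continuous_const.mul ((Real.continuous_sin.add Real.continuous_sin.abs).pow 3)).mul
      Real.continuous_cos
  rw [← intervalIntegral.integral_add_adjacent_intervals
    (a := -(π/2)) (b := 0) (c := π/2)
    (hcont.intervalIntegrable _ _) (hcont.intervalIntegrable _ _)]
  have hz : ∫ x in (-(π/2))..(0:ℝ), 2 * (Real.sin x + |Real.sin x|)^3 * Real.cos x = 0 := by
    rw [intervalIntegral.integral_congr (g := fun _ => (0:ℝ))]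
    · simp
    · intro x hx
      rw [Set.uIcc_of_le (by linarith [Real.pi_pos] : -(π/2) ≤ (0:ℝ))] at hx
      have hs : Real.sin x ≤ 0 :=
        Real.sin_nonpos_of_nonpos_of_neg_pi_le hx.2 (by linarith [Real.pi_pos, hx.1])
      simp only [abs_of_nonpos hs]
      ring
  have h4 : ∫ x in (0:ℝ)..(π/2), 2 * (Real.sin x + |Real.sin x|)^3 * Real.cos x = 4 := by
    rw [intervalIntegral.integral_congr (g := fun x => 16 * Real.sin x ^ 3 * Real.cos x)]
    · have hderiv : ∀ x : ℝ, HasDerivAt (fun x => 4 * Real.sin x ^ 4)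
          (16 * Real.sin x ^ 3 * Real.cos x) x := by
        intro x
        refine (((Real.hasDerivAt_sin x).pow 4).const_mul 4).congr_deriv ?_
        push_cast
        ring
      rw [intervalIntegral.integral_eq_sub_of_hasDerivAt (fun x _ => hderiv x)
        (((continuous_const.mul (Real.continuous_sin.pow 3)).mul
          Real.continuous_cos).intervalIntegrable _ _)]
      simp
    · intro x hx
      rw [Set.uIcc_of_le (by linarith [Real.pi_pos] : (0:ℝ) ≤ π/2)] at hx
      have hs : 0 ≤ Real.sin x :=
        Real.sin_nonneg_of_nonneg_of_le_pi hx.1 (by linarith [Real.pi_pos, hx.2])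
      simp only [abs_of_nonneg hs]
      ring
  rw [hz, h4]
  norm_num

lemma key_integral (lam : ℝ) (h0 : 0 < lam) (h1 : lam ≤ 1) :
    ∫ x in Set.Icc (-(π/2)) (π/2),
      ((lam * Real.sin x + Real.sin (zeta x lam))^3 / Real.sin (zeta x lam)) *
        (2 * Real.sin x) * Real.cos x = 4 * lam := by
  simp only [sin_zeta]
  rw [MeasureTheory.integral_Icc_eq_integral_Ioc,
    ← intervalIntegral.integral_of_le (by linarith [Real.pi_pos] : -(π/2) ≤ π/2)]
  rcases lt_or_eq_of_le h1 with hlt | heq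
  · exact key_lt lam h0 hlt
  · subst heq
    exact key_one

theorem stmt_9 (lam : ℝ) (h0 : 0 < lam) (h1 : lam ≤ 1) :
    ((∫ p, cI lam p ∂nuStar) =
      -((3/8) * ∫ x in Set.Icc (-(π/2)) (π/2),
        ((lam * Real.sin x + Real.sin (zeta x lam))^3 / Real.sin (zeta x lam)) *
          (2 * Real.sin x) * Real.cos x)) ∧
    (∫ p, cI lam p ∂nuStar) = -(3 * lam / 2) := by
  have hval : (∫ p, cI lam p ∂nuStar) =
      -((3/8) * ∫ x in Set.Icc (-(π/2)) (π/2),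
        ((lam * Real.sin x + Real.sin (zeta x lam))^3 / Real.sin (zeta x lam)) *
          (2 * Real.sin x) * Real.cos x) := by
    rw [nuStar_integral lam]
    rw [show -((3/8 : ℝ) * ∫ x in Set.Icc (-(π/2)) (π/2),
        ((lam * Real.sin x + Real.sin (zeta x lam))^3 / Real.sin (zeta x lam)) *
          (2 * Real.sin x) * Real.cos x)
      = (-(3/8) : ℝ) * ∫ x in Set.Icc (-(π/2)) (π/2),
        ((lam * Real.sin x + Real.sin (zeta x lam))^3 / Real.sin (zeta x lam)) *
          (2 * Real.sin x) * Real.cos x by ring]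
    rw [← integral_const_mul]
    refine setIntegral_congr_fun measurableSet_Icc (fun x hx => ?_)
    simp only [cI, smul_eq_mul]
    ring
  refine ⟨hval, ?_⟩
  rw [hval, key_integral lam h0 h1]
  ring
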